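/- With U^{(3)} = ∫_0^Z ψ(φ_n,u) dC(u) and U^{(2)} = ((1-δ)/H̄(Z))·ψ(φ_n,Z) as in the competing-risks Hoeffding decomposition, one has E[(U^{(3)})^2] = 2·E[U^{(2)}·U^{(3)}], both equal to 2∫_0^∞ (∫_0^z ψ(φ_n,y) h(y) dC(y)) dH(z), where h(z) = ∫_0^z ψ(φ_n,u) dC(u). -/

import Mathlib

open MeasureTheory ProbabilityTheory

lemma stmt12_swap_aux (ν : Measure ℝ) [SFinite ν] {f : ℝ → ENNReal} (hf : Measurable f)
    {A : Set ℝ} (hA : MeasurableSet A) :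
    ∫⁻ y in A, f y * ∫⁻ u in A ∩ Set.Ioi y, f u ∂ν ∂ν
      = ∫⁻ u in A, f u * ∫⁻ y in A ∩ Set.Iio u, f y ∂ν ∂ν := by
  set F : ℝ → ℝ → ENNReal := fun y u =>
    A.indicator f y * (A.indicator f u * (if y < u then 1 else 0)) with hF
  have hFm : Measurable (Function.uncurry F) := by
    apply Measurable.mul
    · exact (hf.indicator hA).comp measurable_fst
    · apply Measurable.mul
      · exact (hf.indicator hA).comp measurable_snd
      · exact Measurable.ite (measurableSet_lt measurable_fst measurable_snd)
          measurable_const measurable_const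
  have key : ∫⁻ y, ∫⁻ u, F y u ∂ν ∂ν = ∫⁻ u, ∫⁻ y, F y u ∂ν ∂ν :=
    lintegral_lintegral_swap hFm.aemeasurable
  have h1 : ∫⁻ y in A, f y * ∫⁻ u in A ∩ Set.Ioi y, f u ∂ν ∂ν
      = ∫⁻ y, ∫⁻ u, F y u ∂ν ∂ν := by
    rw [← lintegral_indicator hA]
    refine lintegral_congr fun y => ?_
    by_cases hy : y ∈ A
    · rw [Set.indicator_of_mem hy]
      rw [hF]
      simp only []
      rw [lintegral_const_mul _ (by
        exact (hf.indicator hA).mul (Measurable.ite measurableSet_Ioi measurable_const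
          measurable_const))]
      rw [Set.indicator_of_mem hy]
      congr 1
      rw [← lintegral_indicator (hA.inter measurableSet_Ioi)]
      refine lintegral_congr fun u => ?_
      by_cases hu : u ∈ A <;> by_cases hyu : y < u <;>
        simp [Set.indicator, hu, hyu, Set.mem_Ioi]
    · rw [Set.indicator_of_notMem hy]
      rw [hF]
      simp [Set.indicator_of_notMem hy]
  have h2 : ∫⁻ u in A, f u * ∫⁻ y in A ∩ Set.Iio u, f y ∂ν ∂ν
      = ∫⁻ u, ∫⁻ y, F y u ∂ν ∂ν := by
    rw [← lintegral_indicator hA]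
    refine lintegral_congr fun u => ?_
    by_cases hu : u ∈ A
    · rw [Set.indicator_of_mem hu]
      have : ∀ y, F y u = A.indicator f u * (A.indicator f y * (if y < u then 1 else 0)) := by
        intro y; rw [hF]; ring
      simp only [this]
      rw [lintegral_const_mul _ (by
        exact (hf.indicator hA).mul (Measurable.ite measurableSet_Iio measurable_const
          measurable_const))]
      rw [Set.indicator_of_mem hu]
      congr 1
      rw [← lintegral_indicator (hA.inter measurableSet_Iio)]
      refine lintegral_congr fun y => ?_
      by_cases hy : y ∈ A <;> by_cases hyu : y < u <;>
        simp [Set.indicator, hy, hyu, Set.mem_Iio]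
    · rw [Set.indicator_of_notMem hu]
      rw [hF]
      simp [Set.indicator_of_notMem hu]
  rw [h1, h2, key]

lemma stmt12_square_aux (ν : Measure ℝ) [IsProbabilityMeasure ν] [NullSingletonClass ν] {g : ℝ → ENNReal}
    (hg : Measurable g) (z : ℝ) :
    (∫⁻ u in Set.Ioc 0 z, g u ∂ν) * (∫⁻ u in Set.Ioc 0 z, g u ∂ν)
      = 2 * ∫⁻ y in Set.Ioc 0 z, g y * ∫⁻ u in Set.Ioc 0 y, g u ∂ν ∂ν := by
  have hset1 : ∀ y ∈ Set.Ioc (0:ℝ) z, Set.Ioc y z = Set.Ioc 0 z ∩ Set.Ioi y := by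
    intro y hy
    ext u
    simp only [Set.mem_Ioc, Set.mem_inter_iff, Set.mem_Ioi]
    exact ⟨fun ⟨h1, h2⟩ => ⟨⟨lt_trans hy.1 h1, h2⟩, h1⟩, fun ⟨⟨_, h2⟩, h3⟩ => ⟨h3, h2⟩⟩
  have hset2 : ∀ u ∈ Set.Ioc (0:ℝ) z, Set.Ioc 0 z ∩ Set.Iio u = Set.Ioo 0 u := by
    intro u hu
    ext y
    simp only [Set.mem_Ioc, Set.mem_inter_iff, Set.mem_Iio, Set.mem_Ioo]
    exact ⟨fun ⟨⟨h1, _⟩, h3⟩ => ⟨h1, h3⟩,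
      fun ⟨h1, h2⟩ => ⟨⟨h1, le_trans (le_of_lt h2) hu.2⟩, h2⟩⟩
  have hGmono : Monotone (fun w => ∫⁻ u in Set.Ioc (0:ℝ) w, g u ∂ν) := fun a b hab =>
    lintegral_mono_set (Set.Ioc_subset_Ioc_right hab)
  have hGm : Measurable (fun w => ∫⁻ u in Set.Ioc (0:ℝ) w, g u ∂ν) := hGmono.measurable
  have step1 : (∫⁻ u in Set.Ioc 0 z, g u ∂ν) * (∫⁻ u in Set.Ioc 0 z, g u ∂ν)
      = ∫⁻ y in Set.Ioc 0 z, g y * (∫⁻ u in Set.Ioc 0 z, g u ∂ν) ∂ν := by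
    rw [lintegral_mul_const _ hg]
  have step2 : ∫⁻ y in Set.Ioc 0 z, g y * (∫⁻ u in Set.Ioc 0 z, g u ∂ν) ∂ν
      = (∫⁻ y in Set.Ioc 0 z, g y * ∫⁻ u in Set.Ioc 0 y, g u ∂ν ∂ν)
        + ∫⁻ y in Set.Ioc 0 z, g y * ∫⁻ u in Set.Ioc 0 z ∩ Set.Ioi y, g u ∂ν ∂ν := by
    have hm2 : Measurable fun y => g y * ∫⁻ u in Set.Ioc (0:ℝ) y, g u ∂ν := hg.mul hGm
    rw [← lintegral_add_left hm2]
    refine setLIntegral_congr_fun measurableSet_Ioc ?_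
    intro y hy
    beta_reduce
    rw [← mul_add]
    congr 1
    rw [← hset1 y hy, ← lintegral_union measurableSet_Ioc (Set.Ioc_disjoint_Ioc_of_le le_rfl),
      Set.Ioc_union_Ioc_eq_Ioc (le_of_lt hy.1) hy.2]
  have step3 : ∫⁻ y in Set.Ioc 0 z, g y * ∫⁻ u in Set.Ioc 0 z ∩ Set.Ioi y, g u ∂ν ∂ν
      = ∫⁻ y in Set.Ioc 0 z, g y * ∫⁻ u in Set.Ioc 0 y, g u ∂ν ∂ν := by
    rw [stmt12_swap_aux ν hg measurableSet_Ioc]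
    refine setLIntegral_congr_fun measurableSet_Ioc ?_
    intro u hu
    beta_reduce
    rw [hset2 u hu]
    congr 1
    exact setLIntegral_congr Ioo_ae_eq_Ioc
  rw [step1, step2, step3, two_mul]

/-- With `U⁽³⁾ = ∫_0^Z ψ(φ_n,u) dC(u)` and `U⁽²⁾ = ((1-δ)/H̄(Z)) ψ(φ_n,Z)`, one has
`E[(U⁽³⁾)²] = 2 E[U⁽²⁾ U⁽³⁾] = 2 ∫_0^∞ (∫_0^z ψ(φ_n,y) h(y) dC(y)) dH(z)`,
where `h(z) = ∫_0^z ψ(φ_n,u) dC(u)` and `H` is the distribution of `Z`. -/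
theorem stmt_12 {Ω : Type*} [MeasurableSpace Ω] (P : Measure Ω) [IsProbabilityMeasure P]
    (X C : Ω → ℝ) (𝒞 : Ω → ℕ) (k : ℕ)
    (hX : Measurable X) (hC : Measurable C) (h𝒞 : Measurable 𝒞)
    (hXpos : ∀ ω, 0 ≤ X ω) (hCpos : ∀ ω, 0 ≤ C ω)
    (hindep : IndepFun (fun ω => (X ω, 𝒞 ω)) C P)
    (hFcont : ∀ t : ℝ, P {ω | X ω = t} = 0) (hGcont : ∀ t : ℝ, P {ω | C ω = t} = 0)
    (Fbar Gbar Hbar : ℝ → ℝ)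
    (hFbar : ∀ t, Fbar t = (P {ω | t < X ω}).toReal)
    (hGbar : ∀ t, Gbar t = (P {ω | t < C ω}).toReal)
    (hHbar : ∀ t, Hbar t = Fbar t * Gbar t)
    (hFpos : ∀ t, 0 < Fbar t) (hGpos : ∀ t, 0 < Gbar t)
    (φ : ℝ → ℝ) (hφm : Measurable φ) (hφ : ∀ u, 0 ≤ φ u)
    (ψ : ℝ → ℝ)
    (hψ : ∀ u, ψ u = ∫ s in Set.Ioi u, φ s ∂(Measure.map X (P.restrict {ω | 𝒞 ω = k})))
    (h : ℝ → ℝ)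
    (hh : ∀ z, h z = ∫ u in Set.Ioc (0 : ℝ) z, ψ u / (Hbar u * Gbar u) ∂(Measure.map C P))
    (U₂ U₃ : Ω → ℝ)
    (hU₂ : ∀ ω, U₂ ω = (if X ω ≤ C ω then (0 : ℝ) else 1) / Hbar (min (X ω) (C ω))
        * ψ (min (X ω) (C ω)))
    (hU₃ : ∀ ω, U₃ ω = h (min (X ω) (C ω)))
    (hInt33 : Integrable (fun ω => U₃ ω ^ 2) P)
    (hInt23 : Integrable (fun ω => U₂ ω * U₃ ω) P)
    (hIntd : Integrable
      (fun z => ∫ y in Set.Ioc (0 : ℝ) z, ψ y * h y / (Hbar y * Gbar y) ∂(Measure.map C P))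
      (Measure.map (fun ω => min (X ω) (C ω)) P)) :
    ∫ ω, U₃ ω ^ 2 ∂P = 2 * ∫ ω, U₂ ω * U₃ ω ∂P ∧
      ∫ ω, U₃ ω ^ 2 ∂P
        = 2 * ∫ z, (∫ y in Set.Ioc (0 : ℝ) z,
            ψ y * h y / (Hbar y * Gbar y) ∂(Measure.map C P))
            ∂(Measure.map (fun ω => min (X ω) (C ω)) P) := by
  classical
  set Z : Ω → ℝ := fun ω => min (X ω) (C ω) with hZdef
  have hZ : Measurable Z := hX.min hC
  set ν : Measure ℝ := Measure.map C P with hν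
  set μ : Measure ℝ := Measure.map Z P with hμ
  set π : Measure ℝ := Measure.map X P with hπ
  haveI hνprob : IsProbabilityMeasure ν := Measure.isProbabilityMeasure_map hC.aemeasurable
  haveI hμprob : IsProbabilityMeasure μ := Measure.isProbabilityMeasure_map hZ.aemeasurable
  haveI : NullSingletonClass ν := by
    constructor
    intro t
    rw [hν, Measure.map_apply hC (measurableSet_singleton t)]
    have : C ⁻¹' {t} = {ω | C ω = t} := by ext ω; simp
    rw [this, hGcont t]
  haveI : NullSingletonClass μ := by
    constructor
    intro t
    rw [hμ, Measure.map_apply hZ (measurableSet_singleton t)]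
    have hsub : Z ⁻¹' {t} ⊆ {ω | X ω = t} ∪ {ω | C ω = t} := by
      intro ω hω
      simp only [Set.mem_preimage, Set.mem_singleton_iff, hZdef] at hω
      rcases min_choice (X ω) (C ω) with he | he
      · left; rw [Set.mem_setOf_eq, ← he, hω]
      · right; rw [Set.mem_setOf_eq, ← he, hω]
    refine le_antisymm ?_ zero_le
    calc P (Z ⁻¹' {t}) ≤ P ({ω | X ω = t} ∪ {ω | C ω = t}) := measure_mono hsub
      _ ≤ P {ω | X ω = t} + P {ω | C ω = t} := measure_union_le _ _
      _ = 0 := by rw [hFcont, hGcont, add_zero]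
  -- ψ via lintegral
  set ρ : Measure ℝ := Measure.map X (P.restrict {ω | 𝒞 ω = k}) with hρ
  set T : ℝ → ENNReal := fun u => ∫⁻ s in Set.Ioi u, ENNReal.ofReal (φ s) ∂ρ with hT
  have hTanti : Antitone T := fun a b hab => lintegral_mono_set (Set.Ioi_subset_Ioi hab)
  have hψT : ∀ u, ψ u = (T u).toReal := by
    intro u
    rw [hψ u, integral_eq_lintegral_of_nonneg_ae (Filter.Eventually.of_forall fun s => hφ s)
      hφm.aestronglyMeasurable]
  have hψ0 : ∀ u, 0 ≤ ψ u := fun u => (hψT u) ▸ ENNReal.toReal_nonneg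
  have hψmeas : Measurable ψ := by
    have : ψ = fun u => (T u).toReal := funext hψT
    rw [this]; exact hTanti.measurable.ennreal_toReal
  -- survival functions
  have hFanti : Antitone Fbar := by
    intro a b hab
    rw [hFbar a, hFbar b]
    exact ENNReal.toReal_mono (measure_ne_top P _)
      (measure_mono fun ω hω => lt_of_le_of_lt hab hω)
  have hGanti : Antitone Gbar := by
    intro a b hab
    rw [hGbar a, hGbar b]
    exact ENNReal.toReal_mono (measure_ne_top P _)
      (measure_mono fun ω hω => lt_of_le_of_lt hab hω)
  have hFm : Measurable Fbar := hFanti.measurable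
  have hGm : Measurable Gbar := hGanti.measurable
  have hHm : Measurable Hbar := by
    have : Hbar = fun t => Fbar t * Gbar t := funext hHbar
    rw [this]; exact hFm.mul hGm
  have hHpos : ∀ t, 0 < Hbar t := fun t => by
    rw [hHbar t]; exact mul_pos (hFpos t) (hGpos t)
  have hHanti : Antitone Hbar := by
    intro a b hab
    rw [hHbar a, hHbar b]
    exact mul_le_mul (hFanti hab) (hGanti hab) (hGpos b).le (hFpos a).le
  have hDpos : ∀ t, 0 < Hbar t * Gbar t := fun t => mul_pos (hHpos t) (hGpos t)
  -- the ENNReal versions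
  set gE : ℝ → ENNReal := fun u => ENNReal.ofReal (ψ u / (Hbar u * Gbar u)) with hgE
  have hgEm : Measurable gE := (hψmeas.div (hHm.mul hGm)).ennreal_ofReal
  set G : ℝ → ENNReal := fun w => ∫⁻ u in Set.Ioc 0 w, gE u ∂ν with hGdef
  have hGmono : Monotone G := fun a b hab => lintegral_mono_set (Set.Ioc_subset_Ioc_right hab)
  have hGm2 : Measurable G := hGmono.measurable
  have hhG : ∀ z, h z = (G z).toReal := by
    intro z
    rw [hh z, integral_eq_lintegral_of_nonneg_ae
      (Filter.Eventually.of_forall fun u => div_nonneg (hψ0 u) (hDpos u).le)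
      ((hψmeas.div (hHm.mul hGm)).aestronglyMeasurable)]
  have hh0 : ∀ z, 0 ≤ h z := fun z => (hhG z) ▸ ENNReal.toReal_nonneg
  have hhmeas : Measurable h := by
    have : h = fun z => (G z).toReal := funext hhG
    rw [this]; exact hGm2.ennreal_toReal
  have hGneg : ∀ y : ℝ, ¬ 0 < y → G y = 0 := by
    intro y hy
    rw [hGdef]
    simp only []
    rw [Set.Ioc_eq_empty (fun hlt => hy (lt_of_lt_of_le hlt ?_)), Measure.restrict_empty,
      lintegral_zero_measure]
    · exact le_rfl
  set rE : ℝ → ENNReal := fun y => ENNReal.ofReal (ψ y * h y / (Hbar y * Gbar y)) with hrE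
  have hrEm : Measurable rE := ((hψmeas.mul hhmeas).div (hHm.mul hGm)).ennreal_ofReal
  have hinner_eq : ∀ z, (∫ y in Set.Ioc (0:ℝ) z, ψ y * h y / (Hbar y * Gbar y) ∂ν)
      = (∫⁻ y in Set.Ioc (0:ℝ) z, rE y ∂ν).toReal := by
    intro z
    rw [integral_eq_lintegral_of_nonneg_ae
      (Filter.Eventually.of_forall fun y =>
        div_nonneg (mul_nonneg (hψ0 y) (hh0 y)) (hDpos y).le)
      ((hψmeas.mul hhmeas).div (hHm.mul hGm)).aestronglyMeasurable]
  by_cases hfin : ∀ z, G z ≠ ⊤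
  · -- main branch
    have hrG : ∀ y, rE y = gE y * G y := by
      intro y
      rw [hrE, hgE]
      simp only []
      rw [mul_div_right_comm, ENNReal.ofReal_mul (div_nonneg (hψ0 y) (hDpos y).le), hhG y,
        ENNReal.ofReal_toReal (hfin y)]
    have hIE : ∀ z, G z * G z = 2 * ∫⁻ y in Set.Ioc (0:ℝ) z, rE y ∂ν := by
      intro z
      have h0 := stmt12_square_aux ν hgEm z
      have h1 : ∫⁻ y in Set.Ioc (0:ℝ) z, rE y ∂ν
          = ∫⁻ y in Set.Ioc (0:ℝ) z, gE y * ∫⁻ u in Set.Ioc (0:ℝ) y, gE u ∂ν ∂ν :=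
        setLIntegral_congr_fun measurableSet_Ioc
          (fun y _ => hrG y)
      rw [h1]
      exact h0
    have hIEne : ∀ z, (∫⁻ y in Set.Ioc (0:ℝ) z, rE y ∂ν) ≠ ⊤ := by
      intro z
      have hle : (∫⁻ y in Set.Ioc (0:ℝ) z, rE y ∂ν)
          ≤ 2 * ∫⁻ y in Set.Ioc (0:ℝ) z, rE y ∂ν := by
        calc (∫⁻ y in Set.Ioc (0:ℝ) z, rE y ∂ν)
            = 1 * ∫⁻ y in Set.Ioc (0:ℝ) z, rE y ∂ν := (one_mul _).symm
          _ ≤ 2 * ∫⁻ y in Set.Ioc (0:ℝ) z, rE y ∂ν := mul_le_mul_left one_le_two _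
      exact ne_top_of_le_ne_top (by rw [← hIE z]; exact ENNReal.mul_ne_top (hfin z) (hfin z)) hle
    have key : ∀ z, h z ^ 2 = 2 * ∫ y in Set.Ioc (0:ℝ) z, ψ y * h y / (Hbar y * Gbar y) ∂ν := by
      intro z
      rw [hinner_eq z, hhG z]
      calc (G z).toReal ^ 2 = (G z * G z).toReal := by rw [ENNReal.toReal_mul, sq]
        _ = ((2 : ENNReal) * ∫⁻ y in Set.Ioc (0:ℝ) z, rE y ∂ν).toReal := by rw [hIE z]
        _ = 2 * (∫⁻ y in Set.Ioc (0:ℝ) z, rE y ∂ν).toReal := by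
            rw [ENNReal.toReal_mul]; norm_num
    -- goal 2
    have goal2 : ∫ ω, U₃ ω ^ 2 ∂P
        = 2 * ∫ z, (∫ y in Set.Ioc (0:ℝ) z, ψ y * h y / (Hbar y * Gbar y) ∂ν) ∂μ := by
      have e1 : (fun ω => U₃ ω ^ 2) = fun ω => (fun z => h z ^ 2) (Z ω) :=
        funext fun ω => by rw [hU₃ ω]
      rw [e1]
      have e2 : ∫ ω, (fun z => h z ^ 2) (Z ω) ∂P = ∫ z, h z ^ 2 ∂μ := by
        rw [hμ]
        exact (integral_map hZ.aemeasurable (hhmeas.pow_const 2).aestronglyMeasurable).symm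
      rw [e2]
      have e3 : (fun z => h z ^ 2)
          = fun z => 2 * ∫ y in Set.Ioc (0:ℝ) z, ψ y * h y / (Hbar y * Gbar y) ∂ν :=
        funext key
      calc ∫ z, h z ^ 2 ∂μ
          = ∫ z, 2 * ∫ y in Set.Ioc (0:ℝ) z, ψ y * h y / (Hbar y * Gbar y) ∂ν ∂μ := by rw [e3]
        _ = 2 * ∫ z, (∫ y in Set.Ioc (0:ℝ) z, ψ y * h y / (Hbar y * Gbar y) ∂ν) ∂μ :=
            integral_const_mul 2 _
    -- the product measure
    have hXC : IndepFun X C P := hindep.comp measurable_fst measurable_id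
    have hprod : Measure.map (fun ω => (X ω, C ω)) P = π.prod ν :=
      (indepFun_iff_map_prod_eq_prod_map_map hX.aemeasurable hC.aemeasurable).mp hXC
    have hπIoi : ∀ c, π (Set.Ioi c) = ENNReal.ofReal (Fbar c) := by
      intro c
      rw [hπ, Measure.map_apply hX measurableSet_Ioi, hFbar c,
        ENNReal.ofReal_toReal (measure_ne_top P _)]
      rfl
    have hνIoi : ∀ c, ν (Set.Ioi c) = ENNReal.ofReal (Gbar c) := by
      intro c
      rw [hν, Measure.map_apply hC measurableSet_Ioi, hGbar c,
        ENNReal.ofReal_toReal (measure_ne_top P _)]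
      rfl
    have hμIoi : ∀ y, μ (Set.Ioi y) = ENNReal.ofReal (Fbar y) * ENNReal.ofReal (Gbar y) := by
      intro y
      rw [hμ, Measure.map_apply hZ measurableSet_Ioi, ← hπIoi y, ← hνIoi y, ← Measure.prod_prod,
        ← hprod, Measure.map_apply (hX.prodMk hC) (measurableSet_Ioi.prod measurableSet_Ioi)]
      congr 1
      ext ω
      simp [hZdef, lt_min_iff]
    -- q and the left-hand side
    set q : ℝ → ℝ := fun c => ψ c * h c / Hbar c with hq
    have hqm : Measurable q := (hψmeas.mul hhmeas).div hHm
    have hq0 : ∀ c, 0 ≤ q c := fun c =>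
      div_nonneg (mul_nonneg (hψ0 c) (hh0 c)) (hHpos c).le
    have hU23 : ∀ ω, U₂ ω * U₃ ω = if X ω ≤ C ω then 0 else q (C ω) := by
      intro ω
      rw [hU₂ ω, hU₃ ω]
      by_cases hxc : X ω ≤ C ω
      · simp [hxc]
      · have hm : min (X ω) (C ω) = C ω := min_eq_right (le_of_lt (lt_of_not_ge hxc))
        simp only [if_neg hxc, hm, hq]
        ring
    have hB : Measurable (fun p : ℝ × ℝ =>
        if p.1 ≤ p.2 then (0:ENNReal) else ENNReal.ofReal (q p.2)) :=
      Measurable.ite (measurableSet_le measurable_fst measurable_snd) measurable_const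
        (hqm.ennreal_ofReal.comp measurable_snd)
    have hLHS : ∫ ω, U₂ ω * U₃ ω ∂P
        = (∫⁻ c, ENNReal.ofReal (q c) * ENNReal.ofReal (Fbar c) ∂ν).toReal := by
      rw [integral_eq_lintegral_of_nonneg_ae
        (Filter.Eventually.of_forall fun ω => by
          rw [hU23 ω]; split
          · exact le_rfl
          · exact hq0 _) hInt23.1]
      congr 1
      have e1 : ∀ ω, ENNReal.ofReal (U₂ ω * U₃ ω)
          = (fun p : ℝ × ℝ => if p.1 ≤ p.2 then (0:ENNReal) else ENNReal.ofReal (q p.2))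
            (X ω, C ω) := by
        intro ω; rw [hU23 ω]
        by_cases hxc : X ω ≤ C ω <;> simp [hxc]
      rw [lintegral_congr e1]
      have step : ∫⁻ ω, (fun p : ℝ × ℝ =>
            if p.1 ≤ p.2 then (0:ENNReal) else ENNReal.ofReal (q p.2)) (X ω, C ω) ∂P
          = ∫⁻ p, (fun p : ℝ × ℝ =>
            if p.1 ≤ p.2 then (0:ENNReal) else ENNReal.ofReal (q p.2)) p ∂(π.prod ν) := by
        rw [← hprod]
        exact (lintegral_map hB (hX.prodMk hC)).symm
      rw [step, lintegral_prod_symm _ hB.aemeasurable]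
      refine lintegral_congr fun c => ?_
      have e2 : ∀ x : ℝ, (if x ≤ c then (0:ENNReal) else ENNReal.ofReal (q c))
          = (Set.Ioi c).indicator (fun _ => ENNReal.ofReal (q c)) x := by
        intro x
        by_cases hxc : x ≤ c <;> simp [Set.indicator, hxc, not_le.symm, not_le.mp]
      calc ∫⁻ x, (if x ≤ c then (0:ENNReal) else ENNReal.ofReal (q c)) ∂π
          = ∫⁻ x, (Set.Ioi c).indicator (fun _ => ENNReal.ofReal (q c)) x ∂π :=
            lintegral_congr e2
        _ = ∫⁻ _ in Set.Ioi c, ENNReal.ofReal (q c) ∂π :=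
            lintegral_indicator measurableSet_Ioi _
        _ = ENNReal.ofReal (q c) * π (Set.Ioi c) := setLIntegral_const _ _
        _ = ENNReal.ofReal (q c) * ENNReal.ofReal (Fbar c) := by rw [hπIoi c]
    -- the right-hand side
    have hRHS : ∫ z, (∫ y in Set.Ioc (0:ℝ) z, ψ y * h y / (Hbar y * Gbar y) ∂ν) ∂μ
        = (∫⁻ y, (if 0 < y then
            rE y * (ENNReal.ofReal (Fbar y) * ENNReal.ofReal (Gbar y)) else 0) ∂ν).toReal := by
      rw [integral_eq_lintegral_of_nonneg_ae
        (Filter.Eventually.of_forall fun z => by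
          rw [hinner_eq z]; exact ENNReal.toReal_nonneg) hIntd.1]
      congr 1
      have e1 : ∀ z, ENNReal.ofReal
            (∫ y in Set.Ioc (0:ℝ) z, ψ y * h y / (Hbar y * Gbar y) ∂ν)
          = ∫⁻ y, (if 0 < y ∧ y ≤ z then rE y else 0) ∂ν := by
        intro z
        rw [hinner_eq z, ENNReal.ofReal_toReal (hIEne z), ← lintegral_indicator measurableSet_Ioc]
        refine lintegral_congr fun y => ?_
        by_cases hy : y ∈ Set.Ioc (0:ℝ) z
        · rw [Set.indicator_of_mem hy, if_pos (Set.mem_Ioc.mp hy)]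
        · rw [Set.indicator_of_notMem hy, if_neg (fun hc => hy (Set.mem_Ioc.mpr hc))]
      rw [lintegral_congr e1]
      have hFm2 : Measurable (Function.uncurry fun z y =>
          if 0 < y ∧ y ≤ z then rE y else (0:ENNReal)) := by
        apply Measurable.ite ?_ (hrEm.comp measurable_snd) measurable_const
        exact MeasurableSet.inter
          (measurable_snd measurableSet_Ioi)
          (measurableSet_le measurable_snd measurable_fst)
      rw [lintegral_lintegral_swap hFm2.aemeasurable]
      refine lintegral_congr fun y => ?_
      by_cases hy : 0 < y
      · rw [if_pos hy]
        have e3 : ∀ z : ℝ, (if 0 < y ∧ y ≤ z then rE y else (0:ENNReal))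
            = (Set.Ici y).indicator (fun _ => rE y) z := by
          intro z
          by_cases hyz : y ≤ z <;>
            simp [Set.indicator_apply, Set.mem_Ici, hyz, hy]
        calc ∫⁻ z, (if 0 < y ∧ y ≤ z then rE y else (0:ENNReal)) ∂μ
            = ∫⁻ z, (Set.Ici y).indicator (fun _ => rE y) z ∂μ := lintegral_congr e3
          _ = ∫⁻ _ in Set.Ici y, rE y ∂μ := lintegral_indicator measurableSet_Ici _
          _ = rE y * μ (Set.Ici y) := setLIntegral_const _ _
          _ = rE y * μ (Set.Ioi y) := by rw [measure_congr Ioi_ae_eq_Ici]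
          _ = rE y * (ENNReal.ofReal (Fbar y) * ENNReal.ofReal (Gbar y)) := by rw [hμIoi y]
      · rw [if_neg hy]
        have : ∀ z : ℝ, (if 0 < y ∧ y ≤ z then rE y else (0:ENNReal)) = 0 := by
          intro z; rw [if_neg (fun hc => hy hc.1)]
        simp only [this, lintegral_zero]
    -- the two lintegrals agree
    have hK : ∫⁻ c, ENNReal.ofReal (q c) * ENNReal.ofReal (Fbar c) ∂ν
        = ∫⁻ y, (if 0 < y then
            rE y * (ENNReal.ofReal (Fbar y) * ENNReal.ofReal (Gbar y)) else 0) ∂ν := by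
      refine lintegral_congr fun y => ?_
      by_cases hy : 0 < y
      · rw [if_pos hy, hq, hrE]
        simp only []
        rw [← ENNReal.ofReal_mul (div_nonneg (mul_nonneg (hψ0 y) (hh0 y)) (hHpos y).le),
          ← ENNReal.ofReal_mul (hFpos y).le,
          ← ENNReal.ofReal_mul (div_nonneg (mul_nonneg (hψ0 y) (hh0 y)) (hDpos y).le)]
        congr 1
        have h1 : Hbar y ≠ 0 := (hHpos y).ne'
        have h2 : Gbar y ≠ 0 := (hGpos y).ne'
        field_simp
      · rw [if_neg hy]
        have hG0 : G y = 0 := hGneg y hy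
        have hh0' : h y = 0 := by rw [hhG y, hG0]; rfl
        rw [hq]
        simp [hh0']
    have h23 : ∫ ω, U₂ ω * U₃ ω ∂P
        = ∫ z, (∫ y in Set.Ioc (0:ℝ) z, ψ y * h y / (Hbar y * Gbar y) ∂ν) ∂μ := by
      rw [hLHS, hRHS, hK]
    exact ⟨by rw [goal2, h23], goal2⟩
  · -- degenerate branch: h vanishes identically
    push_neg at hfin
    obtain ⟨z₀, hz₀⟩ := hfin
    have hzero : ∀ z, h z = 0 := by
      intro z
      rw [hhG z]
      by_cases hz : G z = ⊤
      · rw [hz]; rfl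
      · by_cases hz0 : 0 < z
        swap
        · rw [hGneg z hz0]; rfl
        have hzz₀ : z ≤ z₀ := by
          by_contra hcon
          push_neg at hcon
          exact hz (top_le_iff.mp (hz₀ ▸ hGmono hcon.le))
        by_cases hTz : T z = ⊤
        · have hψzero : ∀ u ∈ Set.Ioc (0:ℝ) z, gE u = 0 := by
            intro u hu
            have hTu : T u = ⊤ := top_le_iff.mp (hTz ▸ hTanti hu.2)
            rw [hgE]
            simp [hψT u, hTu]
          have : G z = 0 := by
            rw [hGdef]
            simp only []
            rw [setLIntegral_congr_fun measurableSet_Ioc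
              hψzero, lintegral_zero]
          rw [this]; rfl
        · exfalso
          have hbound : ∀ u ∈ Set.Ioc z z₀, gE u
              ≤ ENNReal.ofReal ((T z).toReal / (Hbar z₀ * Gbar z₀)) := by
            intro u hu
            rw [hgE]
            apply ENNReal.ofReal_le_ofReal
            refine div_le_div₀ ENNReal.toReal_nonneg ?_ (hDpos z₀) ?_
            · rw [hψT u]; exact ENNReal.toReal_mono hTz (hTanti hu.1.le)
            · exact mul_le_mul (hHanti hu.2) (hGanti hu.2) (hGpos z₀).le (hHpos u).le
          have hsplit : G z₀ = G z + ∫⁻ u in Set.Ioc z z₀, gE u ∂ν := by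
            rw [hGdef]
            simp only []
            rw [← lintegral_union measurableSet_Ioc (Set.Ioc_disjoint_Ioc_of_le le_rfl),
              Set.Ioc_union_Ioc_eq_Ioc hz0.le hzz₀]
          have htail : ∫⁻ u in Set.Ioc z z₀, gE u ∂ν
              ≤ ENNReal.ofReal ((T z).toReal / (Hbar z₀ * Gbar z₀)) := by
            calc ∫⁻ u in Set.Ioc z z₀, gE u ∂ν
                ≤ ∫⁻ _ in Set.Ioc z z₀,
                    ENNReal.ofReal ((T z).toReal / (Hbar z₀ * Gbar z₀)) ∂ν :=
                  setLIntegral_mono measurable_const hbound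
              _ = ENNReal.ofReal ((T z).toReal / (Hbar z₀ * Gbar z₀)) * ν (Set.Ioc z z₀) :=
                  setLIntegral_const _ _
              _ ≤ ENNReal.ofReal ((T z).toReal / (Hbar z₀ * Gbar z₀)) * 1 := by
                  exact mul_le_mul_right prob_le_one _
              _ = ENNReal.ofReal ((T z).toReal / (Hbar z₀ * Gbar z₀)) := mul_one _
          rw [hsplit] at hz₀
          exact (ENNReal.add_ne_top.mpr ⟨hz,
            ne_top_of_le_ne_top ENNReal.ofReal_ne_top htail⟩) hz₀
    constructor <;> simp [hU₃, hzero]
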